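/- A unimodular lattice L in R^n contains a 3-frame (a set of n pairwise orthogonal vectors each of norm 3) if and only if L is isomorphic to A_3(C) for some ternary self-dual code C of length n. -/
import Mathlib


/-- The dual of a set of vectors in `ℝⁿ`. -/
def dualLattice {n : ℕ} (L : Set (Fin n → ℝ)) : Set (Fin n → ℝ) :=
  {v | ∀ w ∈ L, ∃ m : ℤ, ∑ i, v i * w i = (m : ℝ)}

/-- The lattice `A₃(C) = (1/√3){x ∈ ℤⁿ : x mod 3 ∈ C}`. -/
noncomputable def A3 {n : ℕ} (C : Submodule (ZMod 3) (Fin n → ZMod 3)) :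
    Set (Fin n → ℝ) :=
  {v | ∃ x : Fin n → ℤ, (∀ i, v i = (x i : ℝ) / Real.sqrt 3) ∧
    (fun i => (x i : ZMod 3)) ∈ C}

/-! ### Auxiliary definitions and lemmas -/

noncomputable def frameMap {n : ℕ} (f : Fin n → Fin n → ℝ) : (Fin n → ℝ) →ₗ[ℝ] (Fin n → ℝ) where
  toFun x := fun t => (∑ i, x i * f i t) / Real.sqrt 3
  map_add' x y := by
    funext t
    simp [add_mul, Finset.sum_add_distrib, add_div]
  map_smul' c x := by
    funext t
    simp only [Pi.smul_apply, smul_eq_mul, RingHom.id_apply, mul_assoc, ← Finset.mul_sum,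
      mul_div_assoc]

noncomputable def uMap {n : ℕ} (f : Fin n → Fin n → ℝ) (a : Fin n → ℤ) : Fin n → ℝ :=
  fun t => (∑ i, (a i : ℝ) * f i t) / 3

lemma frame_dot {n : ℕ} (f : Fin n → Fin n → ℝ)
    (hgram : ∀ i j, ∑ t, f i t * f j t = if i = j then (3:ℝ) else 0)
    (x : Fin n → ℝ) (i : Fin n) :
    ∑ t, (∑ j, x j * f j t) * f i t = 3 * x i := by
  simp_rw [Finset.sum_mul]
  rw [Finset.sum_comm]
  have h : ∀ j, ∑ t, x j * f j t * f i t = x j * (if j = i then (3:ℝ) else 0) := by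
    intro j
    simp_rw [mul_assoc, ← Finset.mul_sum, hgram]
  simp_rw [h, mul_ite, mul_zero]
  simp [Finset.sum_ite_eq', mul_comm]

lemma frame_sum {n : ℕ} (f : Fin n → Fin n → ℝ)
    (hgram : ∀ i j, ∑ t, f i t * f j t = if i = j then (3:ℝ) else 0)
    (x y : Fin n → ℝ) :
    ∑ t, (∑ i, x i * f i t) * (∑ j, y j * f j t) = 3 * ∑ i, x i * y i := by
  have h1 : ∀ t, (∑ i, x i * f i t) * (∑ j, y j * f j t)
      = ∑ j, (∑ i, x i * f i t) * (y j * f j t) := by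
    intro t; rw [Finset.mul_sum]
  simp_rw [h1]
  rw [Finset.sum_comm]
  have h2 : ∀ j, ∑ t, (∑ i, x i * f i t) * (y j * f j t) = 3 * (x j * y j) := by
    intro j
    have : ∀ t, (∑ i, x i * f i t) * (y j * f j t) = y j * ((∑ i, x i * f i t) * f j t) := by
      intro t; ring
    simp_rw [this, ← Finset.mul_sum, frame_dot f hgram x j]
    ring
  simp_rw [h2, ← Finset.mul_sum]

lemma sqrt3_pos : (0:ℝ) < Real.sqrt 3 := Real.sqrt_pos.mpr (by norm_num)

lemma sqrt3_mul_self : Real.sqrt 3 * Real.sqrt 3 = 3 :=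
  Real.mul_self_sqrt (by norm_num)

lemma frameMap_div_sqrt {n : ℕ} (f : Fin n → Fin n → ℝ) (a : Fin n → ℤ) :
    frameMap f (fun i => (a i : ℝ) / Real.sqrt 3) = uMap f a := by
  funext t
  show (∑ i, ((a i : ℝ) / Real.sqrt 3) * f i t) / Real.sqrt 3 = (∑ i, (a i : ℝ) * f i t) / 3
  simp_rw [div_mul_eq_mul_div, ← Finset.sum_div]
  rw [div_div, sqrt3_mul_self]

lemma frameMap_dot {n : ℕ} (f : Fin n → Fin n → ℝ)
    (hgram : ∀ i j, ∑ t, f i t * f j t = if i = j then (3:ℝ) else 0)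
    (x : Fin n → ℝ) (i : Fin n) :
    ∑ t, frameMap f x t * f i t = Real.sqrt 3 * x i := by
  show ∑ t, ((∑ j, x j * f j t) / Real.sqrt 3) * f i t = _
  simp_rw [div_mul_eq_mul_div, ← Finset.sum_div, frame_dot f hgram x i]
  rw [eq_comm, eq_div_iff (ne_of_gt sqrt3_pos)]
  ring_nf
  rw [Real.sq_sqrt (by norm_num : (0:ℝ) ≤ 3)]
  ring

lemma frameMap_inj {n : ℕ} (f : Fin n → Fin n → ℝ)
    (hgram : ∀ i j, ∑ t, f i t * f j t = if i = j then (3:ℝ) else 0) :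
    Function.Injective (frameMap f) := by
  intro x y hxy
  funext i
  have h1 := frameMap_dot f hgram x i
  have h2 := frameMap_dot f hgram y i
  rw [hxy, h2] at h1
  exact (mul_left_cancel₀ (ne_of_gt sqrt3_pos) h1.symm)

lemma frameMap_orth {n : ℕ} (f : Fin n → Fin n → ℝ)
    (hgram : ∀ i j, ∑ t, f i t * f j t = if i = j then (3:ℝ) else 0)
    (x y : Fin n → ℝ) :
    ∑ t, frameMap f x t * frameMap f y t = ∑ i, x i * y i := by
  show ∑ t, ((∑ i, x i * f i t) / Real.sqrt 3) * ((∑ j, y j * f j t) / Real.sqrt 3) = _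
  simp_rw [div_mul_div_comm, sqrt3_mul_self, ← Finset.sum_div, frame_sum f hgram x y]
  rw [mul_div_assoc]
  field_simp

lemma uMap_ip {n : ℕ} (f : Fin n → Fin n → ℝ)
    (hgram : ∀ i j, ∑ t, f i t * f j t = if i = j then (3:ℝ) else 0)
    (a b : Fin n → ℤ) :
    ∑ t, uMap f a t * uMap f b t = (∑ i, (a i : ℝ) * b i) / 3 := by
  unfold uMap
  simp_rw [div_mul_div_comm, ← Finset.sum_div, frame_sum f hgram]
  rw [eq_div_iff (by norm_num : (3:ℝ) ≠ 0)]
  ring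

lemma uMap_add {n : ℕ} (f : Fin n → Fin n → ℝ) (a b : Fin n → ℤ) :
    uMap f (a + b) = uMap f a + uMap f b := by
  funext t
  show (∑ i, ((a i + b i : ℤ) : ℝ) * f i t) / 3 = _
  push_cast
  simp [add_mul, Finset.sum_add_distrib, add_div]
  rfl

lemma uMap_smul {n : ℕ} (f : Fin n → Fin n → ℝ) (m : ℤ) (a : Fin n → ℤ) :
    uMap f (fun i => m * a i) = m • uMap f a := by
  funext t
  show (∑ i, ((m * a i : ℤ) : ℝ) * f i t) / 3 = m • ((∑ i, (a i : ℝ) * f i t) / 3)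
  push_cast
  rw [zsmul_eq_mul]
  simp_rw [mul_assoc, ← Finset.mul_sum, mul_div_assoc]

lemma uMap_mem {n : ℕ} (f : Fin n → Fin n → ℝ) (L : AddSubgroup (Fin n → ℝ))
    (hfL : ∀ i, f i ∈ L) (a : Fin n → ℤ) (h : ∀ i, (3:ℤ) ∣ a i) :
    uMap f a ∈ L := by
  have key : uMap f a = ∑ i, (a i / 3) • f i := by
    funext t
    rw [Finset.sum_apply]
    show (∑ i, (a i : ℝ) * f i t) / 3 = ∑ i, ((a i / 3 : ℤ) • f i) t
    rw [Finset.sum_div]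
    refine Finset.sum_congr rfl fun i _ => ?_
    have h3 : (3:ℤ) * (a i / 3) = a i := Int.mul_ediv_cancel' (h i)
    have ha : (a i : ℝ) = 3 * ((a i / 3 : ℤ) : ℝ) := by
      exact_mod_cast congrArg (Int.cast : ℤ → ℝ) h3.symm
    rw [ha]
    show 3 * ((a i / 3 : ℤ) : ℝ) * f i t / 3 = (a i / 3 : ℤ) • (f i t)
    rw [zsmul_eq_mul]
    ring
  rw [key]
  exact AddSubgroup.sum_mem L fun i _ => L.zsmul_mem (hfL i) _

theorem stmt17 (n : ℕ) (L : AddSubgroup (Fin n → ℝ))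
    (huni : (L : Set (Fin n → ℝ)) = dualLattice (L : Set (Fin n → ℝ))) :
    (∃ f : Fin n → (Fin n → ℝ), (∀ i, f i ∈ L) ∧
        ∀ i j, ∑ t, f i t * f j t = if i = j then (3 : ℝ) else 0) ↔
      ∃ C : Submodule (ZMod 3) (Fin n → ZMod 3),
        (∀ x : Fin n → ZMod 3, x ∈ C ↔ ∀ c ∈ C, ∑ i, x i * c i = 0) ∧
        ∃ g : (Fin n → ℝ) ≃ₗ[ℝ] (Fin n → ℝ),
          (∀ x y : Fin n → ℝ, ∑ i, g x i * g y i = ∑ i, x i * y i) ∧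
          g '' A3 C = (L : Set (Fin n → ℝ)) := by
  constructor
  · rintro ⟨f, hfL, hgram⟩
    have hint : ∀ v ∈ L, ∀ w ∈ L, ∃ m : ℤ, ∑ t, v t * w t = (m:ℝ) := by
      intro v hv w hw
      have hv' : v ∈ dualLattice (L : Set (Fin n → ℝ)) := by rw [← huni]; exact hv
      exact hv' w hw
    have hsurj : Function.Surjective (frameMap f) :=
      (LinearMap.injective_iff_surjective).mp (frameMap_inj f hgram)
    have hrep : ∀ w : Fin n → ℝ, w ∈ L → ∃ b : Fin n → ℤ, w = uMap f b := by
      intro w hw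
      obtain ⟨x, hx⟩ := hsurj w
      have hb : ∀ i, ∃ m : ℤ, ∑ t, w t * f i t = (m:ℝ) := fun i => hint w hw (f i) (hfL i)
      choose b hbspec using hb
      refine ⟨b, ?_⟩
      have hxi : ∀ i, x i = (b i : ℝ) / Real.sqrt 3 := by
        intro i
        have h1 := hbspec i
        rw [← hx, frameMap_dot f hgram x i] at h1
        rw [eq_div_iff (ne_of_gt sqrt3_pos), mul_comm]
        exact h1
      have hxeq : x = fun i => (b i : ℝ) / Real.sqrt 3 := funext hxi
      rw [← hx, hxeq, frameMap_div_sqrt]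
    have hmod : ∀ a b : Fin n → ℤ, (∀ i, (a i : ZMod 3) = (b i : ZMod 3)) →
        uMap f a ∈ L → uMap f b ∈ L := by
      intro a b hab ha
      have hdvd : ∀ i, (3:ℤ) ∣ (b - a) i := by
        intro i
        have hz : ((b i - a i : ℤ) : ZMod 3) = 0 := by
          push_cast
          rw [← hab i]
          ring
        exact_mod_cast (ZMod.intCast_zmod_eq_zero_iff_dvd _ 3).mp hz
      have h2 : uMap f (b - a) ∈ L := uMap_mem f L hfL _ hdvd
      have h3 : uMap f b = uMap f a + uMap f (b - a) := by
        rw [← uMap_add, add_sub_cancel]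
      rw [h3]
      exact L.add_mem ha h2
    refine ⟨{
      carrier := {x | ∃ a : Fin n → ℤ, (∀ i, (a i : ZMod 3) = x i) ∧ uMap f a ∈ L}
      add_mem' := ?_
      zero_mem' := ?_
      smul_mem' := ?_ }, ?_, ?_⟩
    · rintro x y ⟨a, ha, haL⟩ ⟨b, hb, hbL⟩
      refine ⟨a + b, fun i => ?_, ?_⟩
      · show ((a i + b i : ℤ) : ZMod 3) = x i + y i
        push_cast
        rw [ha i, hb i]
      · rw [uMap_add]
        exact L.add_mem haL hbL
    · refine ⟨0, fun i => by simp, ?_⟩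
      have h0 : uMap f 0 = 0 := by funext t; simp [uMap]
      rw [h0]
      exact L.zero_mem
    · rintro c x ⟨a, ha, haL⟩
      refine ⟨fun i => (c.val : ℤ) * a i, fun i => ?_, ?_⟩
      · push_cast [ZMod.natCast_val, ZMod.cast_id]
        rw [ha i]
        rfl
      · rw [uMap_smul]
        exact L.zsmul_mem haL _
    · -- self-duality
      intro x
      constructor
      · rintro ⟨a, ha, haL⟩ c ⟨b, hb, hbL⟩
        obtain ⟨m, hm⟩ := hint _ haL _ hbL
        rw [uMap_ip f hgram] at hm
        have h3 : (∑ i, a i * b i : ℤ) = 3 * m := by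
          have hc : ((∑ i, a i * b i : ℤ) : ℝ) = ((3 * m : ℤ) : ℝ) := by
            push_cast
            rw [div_eq_iff (by norm_num : (3:ℝ) ≠ 0)] at hm
            rw [hm]
            ring
          exact_mod_cast hc
        calc ∑ i, x i * c i = ((∑ i, a i * b i : ℤ) : ZMod 3) := by
              push_cast
              exact (Finset.sum_congr rfl fun i _ => by rw [ha i, hb i]).symm
          _ = 0 := by rw [h3]; exact (ZMod.intCast_zmod_eq_zero_iff_dvd _ 3).mpr ⟨m, rfl⟩
      · intro hx
        set a : Fin n → ℤ := fun i => ((x i).val : ℤ) with haa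
        have ha : ∀ i, (a i : ZMod 3) = x i := by
          intro i
          show (((x i).val : ℤ) : ZMod 3) = x i
          push_cast [ZMod.natCast_val, ZMod.cast_id]
          rfl
        refine ⟨a, ha, ?_⟩
        have hdualmem : uMap f a ∈ dualLattice (L : Set (Fin n → ℝ)) := by
          intro w hw
          obtain ⟨b, rfl⟩ := hrep w hw
          have hbC : (fun i => (b i : ZMod 3)) ∈
              {x | ∃ a : Fin n → ℤ, (∀ i, (a i : ZMod 3) = x i) ∧ uMap f a ∈ L} :=
            ⟨b, fun i => rfl, hw⟩
          have h0 := hx _ hbC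
          have h1 : ((∑ i, a i * b i : ℤ) : ZMod 3) = 0 := by
            push_cast
            rw [← h0]
            exact Finset.sum_congr rfl fun i _ => by rw [ha i]
          have hdvd : (3:ℤ) ∣ ∑ i, a i * b i := by
            exact_mod_cast (ZMod.intCast_zmod_eq_zero_iff_dvd _ 3).mp h1
          obtain ⟨m, hm⟩ := hdvd
          refine ⟨m, ?_⟩
          rw [uMap_ip f hgram]
          rw [div_eq_iff (by norm_num : (3:ℝ) ≠ 0)]
          have : ((∑ i, a i * b i : ℤ) : ℝ) = ((3 * m : ℤ) : ℝ) := by exact_mod_cast hm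
          push_cast at this
          rw [this]
          ring
        rw [← huni] at hdualmem
        exact hdualmem
    · refine ⟨LinearEquiv.ofBijective (frameMap f) ⟨frameMap_inj f hgram, hsurj⟩,
        fun x y => frameMap_orth f hgram x y, ?_⟩
      ext w
      simp only [Set.mem_image]
      constructor
      · rintro ⟨v, ⟨a, hva, haC⟩, rfl⟩
        have hv : v = fun i => (a i : ℝ) / Real.sqrt 3 := funext hva
        show frameMap f v ∈ (L : Set (Fin n → ℝ))
        rw [hv, frameMap_div_sqrt]
        obtain ⟨b, hb, hbL⟩ := haC
        exact hmod b a (fun i => hb i) hbL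
      · intro hw
        obtain ⟨b, hb⟩ := hrep w hw
        refine ⟨fun i => (b i : ℝ) / Real.sqrt 3, ⟨b, fun i => rfl, ⟨b, fun i => rfl, hb ▸ hw⟩⟩, ?_⟩
        show frameMap f (fun i => (b i : ℝ) / Real.sqrt 3) = w
        rw [frameMap_div_sqrt, ← hb]
  · rintro ⟨C, hC, g, hg, hgL⟩
    refine ⟨fun i => g (fun t => if t = i then Real.sqrt 3 else 0), fun i => ?_, fun i j => ?_⟩
    · have hmem : (fun t => if t = i then Real.sqrt 3 else 0) ∈ A3 C := by
        refine ⟨fun t => if t = i then 3 else 0, fun t => ?_, ?_⟩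
        · by_cases h : t = i <;> simp [h]
        · have hz : (fun t => ((if t = i then (3:ℤ) else 0 : ℤ) : ZMod 3)) = 0 := by
            funext t
            show ((if t = i then (3:ℤ) else 0 : ℤ) : ZMod 3) = 0
            by_cases h : t = i
            · rw [if_pos h]; decide
            · rw [if_neg h]; simp
          rw [hz]
          exact C.zero_mem
      have h2 : g (fun t => if t = i then Real.sqrt 3 else 0) ∈ (L : Set (Fin n → ℝ)) := by
        rw [← hgL]
        exact ⟨_, hmem, rfl⟩
      exact h2
    · rw [hg]
      simp only [ite_mul, zero_mul, mul_ite, mul_zero]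
      rw [Finset.sum_ite_eq']
      rcases eq_or_ne i j with h | h
      · simp [h, sqrt3_mul_self]
      · simp [h, Ne.symm h]
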